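/- For fixed x2 ∈ [0,1], the map x ↦ h_D(x, x2) is monotonically decreasing on [0, x2] and monotonically increasing on [x2, 1]. -/

import Mathlib

/-- Binary entropy function (base 2), with the convention `0 log 0 = 0`. -/
noncomputable def hb (x : ℝ) : ℝ := -(x * Real.logb 2 x) - (1 - x) * Real.logb 2 (1 - x)

/-- The function `h_D`. -/
noncomputable def hD (x1 x2 : ℝ) : ℝ := 2 * hb ((x1 + x2) / 2) - hb x1 - hb x2

lemma hb_eq : hb = fun x => (-(x * Real.log x) - (1 - x) * Real.log (1 - x)) * (Real.log 2)⁻¹ := by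
  funext x
  simp [hb, Real.logb, div_eq_mul_inv]
  ring

lemma hb_continuous : Continuous hb := by
  rw [hb_eq]
  have h1 : Continuous fun x : ℝ => x * Real.log x := Real.continuous_mul_log
  have h2 : Continuous fun x : ℝ => (1 - x) * Real.log (1 - x) :=
    h1.comp (continuous_const.sub continuous_id)
  exact ((h1.neg.sub h2).mul continuous_const)

lemma hb_hasDerivAt {t : ℝ} (h0 : 0 < t) (h1 : t < 1) :
    HasDerivAt hb (Real.logb 2 (1 - t) - Real.logb 2 t) t := by
  have h1' : (0:ℝ) < 1 - t := by linarith
  have A : HasDerivAt (fun x : ℝ => x * Real.log x) (Real.log t + 1) t :=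
    Real.hasDerivAt_mul_log h0.ne'
  have B : HasDerivAt (fun x : ℝ => (1 - x) * Real.log (1 - x))
      ((Real.log (1 - t) + 1) * (-1)) t := by
    exact (Real.hasDerivAt_mul_log h1'.ne').comp t
      (((hasDerivAt_id t).const_sub 1))
  have C := ((A.neg.sub B).mul_const (Real.log 2)⁻¹)
  rw [hb_eq]
  refine C.congr_deriv ?_
  have hl2 : Real.log 2 ≠ 0 := by
    have := Real.log_pos (by norm_num : (1:ℝ) < 2); linarith
  simp only [Real.logb, div_eq_mul_inv]
  ring

lemma hD_hasDerivAt (x2 : ℝ) {x : ℝ} (hx0 : 0 < x) (hx1 : x < 1)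
    (hm0 : 0 < (x + x2) / 2) (hm1 : (x + x2) / 2 < 1) :
    HasDerivAt (fun x => hD x x2)
      (2 * ((Real.logb 2 (1 - (x + x2) / 2) - Real.logb 2 ((x + x2) / 2)) * (1 / 2))
        - (Real.logb 2 (1 - x) - Real.logb 2 x)) x := by
  have A : HasDerivAt (fun x : ℝ => hb ((x + x2) / 2))
      ((Real.logb 2 (1 - (x + x2) / 2) - Real.logb 2 ((x + x2) / 2)) * (1 / 2)) x := by
    have h := (hb_hasDerivAt hm0 hm1).comp x
      (((hasDerivAt_id x).add_const x2).div_const 2)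
    exact h
  have B := hb_hasDerivAt hx0 hx1
  have C := ((A.const_mul 2).sub B).sub_const (hb x2)
  exact C

lemma logb2_strictMono : ∀ {a b : ℝ}, 0 < a → a < b → Real.logb 2 a < Real.logb 2 b :=
  fun ha hab => Real.logb_lt_logb (by norm_num) ha hab

theorem hD_antitone_monotone (x2 : ℝ) (hx2 : x2 ∈ Set.Icc (0:ℝ) 1) :
    AntitoneOn (fun x => hD x x2) (Set.Icc 0 x2) ∧
    MonotoneOn (fun x => hD x x2) (Set.Icc x2 1) := by
  obtain ⟨h20, h21⟩ := hx2
  have hcont : Continuous fun x => hD x x2 := by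
    unfold hD
    exact ((continuous_const.mul (hb_continuous.comp
      (by continuity))).sub hb_continuous).sub continuous_const
  constructor
  · apply antitoneOn_of_deriv_nonpos (convex_Icc _ _) hcont.continuousOn
    · intro x hx
      rw [interior_Icc] at hx
      obtain ⟨hx0, hxx2⟩ := hx
      exact (hD_hasDerivAt x2 hx0 (lt_of_lt_of_le hxx2 h21)
        (by linarith) (by linarith)).differentiableAt.differentiableWithinAt
    · intro x hx
      rw [interior_Icc] at hx
      obtain ⟨hx0, hxx2⟩ := hx
      have hx1 : x < 1 := lt_of_lt_of_le hxx2 h21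
      have hm0 : 0 < (x + x2) / 2 := by linarith
      have hm1 : (x + x2) / 2 < 1 := by linarith
      rw [(hD_hasDerivAt x2 hx0 hx1 hm0 hm1).deriv]
      have l1 : Real.logb 2 x < Real.logb 2 ((x + x2) / 2) :=
        logb2_strictMono hx0 (by linarith)
      have l2 : Real.logb 2 (1 - (x + x2) / 2) < Real.logb 2 (1 - x) :=
        logb2_strictMono (by linarith) (by linarith)
      nlinarith
  · apply monotoneOn_of_deriv_nonneg (convex_Icc _ _) hcont.continuousOn
    · intro x hx
      rw [interior_Icc] at hx
      obtain ⟨hxx2, hx1⟩ := hx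
      exact (hD_hasDerivAt x2 (lt_of_le_of_lt h20 hxx2) hx1
        (by linarith) (by linarith)).differentiableAt.differentiableWithinAt
    · intro x hx
      rw [interior_Icc] at hx
      obtain ⟨hxx2, hx1⟩ := hx
      have hx0 : 0 < x := lt_of_le_of_lt h20 hxx2
      have hm0 : 0 < (x + x2) / 2 := by linarith
      have hm1 : (x + x2) / 2 < 1 := by linarith
      rw [(hD_hasDerivAt x2 hx0 hx1 hm0 hm1).deriv]
      have l1 : Real.logb 2 ((x + x2) / 2) < Real.logb 2 x :=
        logb2_strictMono hm0 (by linarith)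
      have l2 : Real.logb 2 (1 - x) < Real.logb 2 (1 - (x + x2) / 2) :=
        logb2_strictMono (by linarith) (by linarith)
      nlinarith
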